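/- Let (Y,d) be a CAT(1) space and let P, Q, R ∈ Y with d(Q,P) < π/2 and d(R,P) < π/2. Let M = ½Q + ½R be the midpoint of the geodesic from Q to R. Then d(M,P)² + 2·cos(d(M,P)) ≤ ½·( d(Q,P)² + 2·cos(d(Q,P)) + d(R,P)² + 2·cos(d(R,P)) ). -/

import Mathlib

open scoped RealInnerProductSpace

noncomputable def sphereDist (x y : EuclideanSpace ℝ (Fin 3)) : ℝ :=
  Real.arccos ⟪x, y⟫

open Classical in
noncomputable def sphereInterp (x y : EuclideanSpace ℝ (Fin 3)) (t : ℝ) :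
    EuclideanSpace ℝ (Fin 3) :=
  if Real.sin (sphereDist x y) = 0 then x
  else (Real.sin ((1 - t) * sphereDist x y) / Real.sin (sphereDist x y)) • x
     + (Real.sin (t * sphereDist x y) / Real.sin (sphereDist x y)) • y

/-- A CAT(1) structure on a complete metric space `Y`: every pair of points at
distance `< π` is joined by a constant-speed minimizing geodesic
`t ↦ interp P Q t` (the point `(1-t)P + tQ`, at distance `t·d(P,Q)` from `P`),
and every geodesic triangle of perimeter `< 2π` satisfies the CAT(1)
comparison inequality with respect to any comparison triangle on the unit
sphere `S² ⊂ ℝ³` (with the angular metric). -/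
structure CAT1Space (Y : Type*) [MetricSpace Y] [CompleteSpace Y] where
  interp : Y → Y → ℝ → Y
  interp_zero : ∀ P Q : Y, dist P Q < Real.pi → interp P Q 0 = P
  interp_one : ∀ P Q : Y, dist P Q < Real.pi → interp P Q 1 = Q
  interp_dist : ∀ P Q : Y, dist P Q < Real.pi →
    ∀ s t : ℝ, s ∈ Set.Icc (0:ℝ) 1 → t ∈ Set.Icc (0:ℝ) 1 →
      dist (interp P Q s) (interp P Q t) = |s - t| * dist P Q
  comparison : ∀ P Q R : Y,
    dist P Q + dist Q R + dist R P < 2 * Real.pi →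
    ∀ p q r : EuclideanSpace ℝ (Fin 3), ‖p‖ = 1 → ‖q‖ = 1 → ‖r‖ = 1 →
      sphereDist p q = dist P Q → sphereDist q r = dist Q R →
      sphereDist r p = dist R P →
      ∀ s t : ℝ, s ∈ Set.Icc (0:ℝ) 1 → t ∈ Set.Icc (0:ℝ) 1 →
        dist (interp P Q t) (interp R Q s) ≤
          sphereDist (sphereInterp p q t) (sphereInterp r q s)



lemma arccos_anti {x y : ℝ} (h : x ≤ y) : Real.arccos y ≤ Real.arccos x := by
  simp only [Real.arccos]
  linarith [Real.monotone_arcsin h]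

lemma f_mono {x y : ℝ} (hx : 0 ≤ x) (hxy : x ≤ y) :
    x ^ 2 + 2 * Real.cos x ≤ y ^ 2 + 2 * Real.cos y := by
  have h1 : Real.cos y - Real.cos x = -2 * Real.sin ((y+x)/2) * Real.sin ((y-x)/2) :=
    Real.cos_sub_cos y x
  have h2 : |Real.sin ((y+x)/2)| ≤ |(y+x)/2| := Real.abs_sin_le_abs
  have h3 : |Real.sin ((y-x)/2)| ≤ |(y-x)/2| := Real.abs_sin_le_abs
  rw [abs_of_nonneg (by linarith : (0:ℝ) ≤ (y+x)/2)] at h2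
  rw [abs_of_nonneg (by linarith : (0:ℝ) ≤ (y-x)/2)] at h3
  have h6 : Real.sin ((y+x)/2) * Real.sin ((y-x)/2) ≤ ((y+x)/2) * ((y-x)/2) := by
    calc Real.sin ((y+x)/2) * Real.sin ((y-x)/2)
        ≤ |Real.sin ((y+x)/2) * Real.sin ((y-x)/2)| := le_abs_self _
      _ = |Real.sin ((y+x)/2)| * |Real.sin ((y-x)/2)| := abs_mul _ _
      _ ≤ ((y+x)/2) * ((y-x)/2) := mul_le_mul h2 h3 (abs_nonneg _) (by linarith)
  nlinarith [h6, h1]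

lemma f_midconvex (b c : ℝ) :
    ((b+c)/2)^2 + 2*Real.cos ((b+c)/2) ≤
      (1/2)*(c^2 + 2*Real.cos c + b^2 + 2*Real.cos b) := by
  have h1 : Real.cos b + Real.cos c
      = 2 * Real.cos ((b+c)/2) * Real.cos ((b-c)/2) := Real.cos_add_cos b c
  have hv2 : Real.cos ((b-c)/2) = 1 - 2 * Real.sin ((b-c)/4)^2 := by
    have h := Real.cos_sq ((b-c)/4)
    rw [show 2*((b-c)/4) = (b-c)/2 by ring] at h
    nlinarith [Real.sin_sq_add_cos_sq ((b-c)/4)]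
  have hs : Real.sin ((b-c)/4)^2 ≤ ((b-c)/4)^2 := by
    have h := Real.abs_sin_le_abs (x := (b-c)/4)
    nlinarith [abs_nonneg (Real.sin ((b-c)/4)), abs_nonneg ((b-c)/4),
      sq_abs (Real.sin ((b-c)/4)), sq_abs ((b-c)/4)]
  have key : 2 * Real.cos ((b+c)/2) * (1 - Real.cos ((b-c)/2)) ≤ ((b-c)/2)^2 := by
    rcases le_or_gt (Real.cos ((b+c)/2)) 0 with h | h
    · nlinarith [Real.cos_le_one ((b-c)/2), sq_nonneg ((b-c)/2)]
    · nlinarith [mul_le_mul_of_nonneg_right (Real.cos_le_one ((b+c)/2))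
        (by nlinarith [Real.cos_le_one ((b-c)/2)] : (0:ℝ) ≤ 1 - Real.cos ((b-c)/2))]
  nlinarith [key, h1]

noncomputable def v3 (x y z : ℝ) : EuclideanSpace ℝ (Fin 3) :=
  (WithLp.equiv 2 (Fin 3 → ℝ)).symm ![x, y, z]

lemma inner3 (x₁ x₂ x₃ y₁ y₂ y₃ : ℝ) :
    ⟪v3 x₁ x₂ x₃, v3 y₁ y₂ y₃⟫ = x₁*y₁+x₂*y₂+x₃*y₃ := by
  simp [PiLp.inner_apply, RCLike.inner_apply, Fin.sum_univ_three, v3,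
    WithLp.equiv_symm_apply]
  ring

lemma norm3 (x₁ x₂ x₃ : ℝ) (h : x₁^2+x₂^2+x₃^2 = 1) : ‖v3 x₁ x₂ x₃‖ = 1 := by
  rw [EuclideanSpace.norm_eq]
  simp only [Fin.sum_univ_three, Real.norm_eq_abs, sq_abs, v3,
    WithLp.equiv_symm_apply, PiLp.toLp_apply, Matrix.cons_val_zero, Matrix.cons_val_one,
    Matrix.head_cons, Matrix.cons_val_two, Matrix.tail_cons]
  rw [h, Real.sqrt_one]

lemma sphereInterp_zero (x y : EuclideanSpace ℝ (Fin 3)) : sphereInterp x y 0 = x := by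
  unfold sphereInterp
  split
  · rfl
  · rename_i h
    rw [zero_mul, Real.sin_zero, zero_div, zero_smul, add_zero, sub_zero, one_mul,
      div_self h, one_smul]

lemma arccos_anti' {x y : ℝ} (h : x ≤ y) : Real.arccos y ≤ Real.arccos x := by
  simp only [Real.arccos]
  linarith [Real.monotone_arcsin h]

set_option maxHeartbeats 1000000 in
lemma sphere_compare (a b c : ℝ) (ha0 : 0 < a) (hc0 : 0 < c)
    (hb0 : 0 ≤ b) (hb : b < Real.pi/2) (hc : c < Real.pi/2)
    (h1 : a ≤ b + c) (h2 : b ≤ a + c) (h3 : c ≤ a + b) :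
    ∃ p q r : EuclideanSpace ℝ (Fin 3), ‖p‖ = 1 ∧ ‖q‖ = 1 ∧ ‖r‖ = 1 ∧
      sphereDist p q = a ∧ sphereDist q r = b ∧ sphereDist r p = c ∧
      sphereDist (sphereInterp p q (1/2)) (sphereInterp r q 0) ≤ (b + c) / 2 := by
  have hπ : (0:ℝ) < Real.pi := Real.pi_pos
  have haπ : a < Real.pi := by linarith
  have hsa : 0 < Real.sin a := Real.sin_pos_of_pos_of_lt_pi ha0 haπ
  have hsc : 0 < Real.sin c := Real.sin_pos_of_pos_of_lt_pi hc0 (by linarith)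
  -- bounds on cos b
  have hcos_up : Real.cos b ≤ Real.cos a * Real.cos c + Real.sin a * Real.sin c := by
    have habs : |a - c| ≤ b := abs_le.2 ⟨by linarith, by linarith⟩
    have := Real.cos_le_cos_of_nonneg_of_le_pi (abs_nonneg (a-c)) (by linarith) habs
    rw [Real.cos_abs, Real.cos_sub] at this
    linarith
  have hcos_lo : Real.cos a * Real.cos c - Real.sin a * Real.sin c ≤ Real.cos b := by
    rw [← Real.cos_add]
    rcases le_or_gt (a + c) Real.pi with h | h
    · exact Real.cos_le_cos_of_nonneg_of_le_pi hb0 h h2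
    · have hnp : Real.cos (a + c) ≤ 0 :=
        Real.cos_nonpos_of_pi_div_two_le_of_le (by linarith) (by linarith)
      have hbpos : 0 < Real.cos b :=
        Real.cos_pos_of_mem_Ioo ⟨by linarith, hb⟩
      linarith
  set D : ℝ := (Real.cos b - Real.cos a * Real.cos c)/(Real.sin a * Real.sin c) with hD
  have hsac : 0 < Real.sin a * Real.sin c := mul_pos hsa hsc
  have hD1 : D^2 ≤ 1 := by
    have habs : |Real.cos b - Real.cos a * Real.cos c| ≤ Real.sin a * Real.sin c :=
      abs_le.2 ⟨by linarith, by linarith⟩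
    have : |D| ≤ 1 := by
      rw [hD, abs_div, abs_of_pos hsac]
      exact div_le_one_of_le₀ habs (le_of_lt hsac)
    nlinarith [sq_abs D, abs_nonneg D, this]
  set E : ℝ := Real.sqrt (1 - D^2) with hE
  have hE2 : E^2 = 1 - D^2 := Real.sq_sqrt (by linarith)
  set p := v3 1 0 0 with hp
  set q := v3 (Real.cos a) (Real.sin a) 0 with hq
  set r := v3 (Real.cos c) (Real.sin c * D) (Real.sin c * E) with hr
  have hpq : sphereDist p q = a := by
    unfold sphereDist
    rw [hp, hq, inner3]
    rw [show (1:ℝ)*Real.cos a + 0*Real.sin a + 0*0 = Real.cos a by ring]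
    exact Real.arccos_cos (le_of_lt ha0) (le_of_lt haπ)
  have hqrcos : ⟪q, r⟫ = Real.cos b := by
    rw [hq, hr, inner3]
    rw [hD]; field_simp; ring
  have hqr : sphereDist q r = b := by
    unfold sphereDist
    rw [hqrcos]
    exact Real.arccos_cos hb0 (by linarith)
  have hrp : sphereDist r p = c := by
    unfold sphereDist
    rw [hr, hp, inner3]
    rw [show Real.cos c*1 + Real.sin c*D*0 + Real.sin c*E*0 = Real.cos c by ring]
    exact Real.arccos_cos (le_of_lt hc0) (by linarith)
  have hpr : ⟪p, r⟫ = Real.cos c := by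
    rw [hp, hr, inner3]; ring
  have hsa2 : 0 < Real.sin (a/2) :=
    Real.sin_pos_of_pos_of_lt_pi (by linarith) (by linarith)
  have hca2 : 0 < Real.cos (a/2) := Real.cos_pos_of_mem_Ioo ⟨by linarith, by linarith⟩
  have hsin2 : Real.sin a = 2 * Real.sin (a/2) * Real.cos (a/2) := by
    have h := Real.sin_two_mul (a/2)
    rw [show 2*(a/2) = a by ring] at h
    linarith
  have hk : Real.sin (a/2)/Real.sin a = 1/(2*Real.cos (a/2)) := by
    rw [hsin2]
    rw [show 2 * Real.sin (a/2) * Real.cos (a/2) = Real.sin (a/2) * (2*Real.cos (a/2)) by ring]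
    rw [div_mul_eq_div_div]
    rw [div_self (ne_of_gt hsa2)]
  have hm : sphereInterp p q (1/2)
      = (Real.sin (a/2)/Real.sin a) • p + (Real.sin (a/2)/Real.sin a) • q := by
    unfold sphereInterp
    rw [hpq, if_neg (ne_of_gt hsa)]
    rw [show (1-(1/2:ℝ)) * a = a/2 by ring, show ((1/2:ℝ)) * a = a/2 by ring]
  have hinner : ⟪sphereInterp p q (1/2), r⟫
      = (Real.sin (a/2)/Real.sin a) * (Real.cos c + Real.cos b) := by
    rw [hm, inner_add_left, real_inner_smul_left, real_inner_smul_left, hpr, hqrcos]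
    ring
  have hucos : (0:ℝ) ≤ Real.cos ((b+c)/2) :=
    Real.cos_nonneg_of_mem_Icc ⟨by linarith, by linarith⟩
  have hvcos : Real.cos (a/2) ≤ Real.cos ((b-c)/2) := by
    have habs : |(b-c)/2| ≤ a/2 := abs_le.2 ⟨by linarith, by linarith⟩
    have h := Real.cos_le_cos_of_nonneg_of_le_pi (abs_nonneg _) (by linarith : a/2 ≤ Real.pi) habs
    rwa [Real.cos_abs] at h
  have hcc : Real.cos b + Real.cos c
      = 2 * Real.cos ((b+c)/2) * Real.cos ((b-c)/2) := Real.cos_add_cos b c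
  have hX : Real.cos ((b+c)/2) ≤ (Real.sin (a/2)/Real.sin a) * (Real.cos c + Real.cos b) := by
    rw [hk, div_mul_eq_mul_div, le_div_iff₀ (by linarith)]
    nlinarith [mul_le_mul_of_nonneg_left hvcos hucos]
  have hfin : sphereDist (sphereInterp p q (1/2)) (sphereInterp r q 0) ≤ (b + c) / 2 := by
    rw [sphereInterp_zero]
    unfold sphereDist
    rw [hinner]  -- might fail if hinner statement not syntactically matching; try calc
    calc Real.arccos ((Real.sin (a/2)/Real.sin a) * (Real.cos c + Real.cos b))
        ≤ Real.arccos (Real.cos ((b+c)/2)) := arccos_anti' hX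
      _ = (b+c)/2 := Real.arccos_cos (by linarith) (by linarith)
  exact ⟨p, q, r, norm3 _ _ _ (by norm_num),
    norm3 _ _ _ (by nlinarith [Real.sin_sq_add_cos_sq a]),
    norm3 _ _ _ (by nlinarith [Real.sin_sq_add_cos_sq c]),
    hpq, hqr, hrp, hfin⟩

/-- Midpoint convexity of `s ↦ s² + 2cos s` along distances in a CAT(1)
space. -/
theorem statement6 (Y : Type*) [MetricSpace Y] [CompleteSpace Y]
    (H : CAT1Space Y) (P Q R : Y)
    (hQP : dist Q P < Real.pi / 2) (hRP : dist R P < Real.pi / 2) :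
    dist (H.interp Q R (1 / 2)) P ^ 2 +
        2 * Real.cos (dist (H.interp Q R (1 / 2)) P) ≤
      (1 / 2) * (dist Q P ^ 2 + 2 * Real.cos (dist Q P) +
        dist R P ^ 2 + 2 * Real.cos (dist R P)) := by
  have hπ : (0:ℝ) < Real.pi := Real.pi_pos
  set a := dist Q R with haa
  set b := dist R P with hbb
  set c := dist P Q with hcc
  have ha0 : (0:ℝ) ≤ a := dist_nonneg
  have hb0 : (0:ℝ) ≤ b := dist_nonneg
  have hc0 : (0:ℝ) ≤ c := dist_nonneg
  have e1 : dist Q P = dist P Q := dist_comm Q P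
  have e2 : dist P R = dist R P := dist_comm P R
  have e3 : dist R Q = dist Q R := dist_comm R Q
  have hbπ : b < Real.pi/2 := hRP
  have hcπ : c < Real.pi/2 := by rw [hcc, ← e1]; exact hQP
  have h1 : a ≤ b + c := by
    rw [haa, hbb, hcc]; linarith [dist_triangle Q P R, e1, e2]
  have h2 : b ≤ a + c := by
    rw [haa, hbb, hcc]; linarith [dist_triangle R Q P, e1, e3]
  have h3 : c ≤ a + b := by
    rw [haa, hbb, hcc]; linarith [dist_triangle P R Q, e2, e3]
  suffices h : dist (H.interp Q R (1/2)) P ≤ (b + c)/2 by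
    rw [e1]
    exact le_trans (f_mono dist_nonneg h) (f_midconvex b c)
  rcases eq_or_lt_of_le ha0 with ha | ha
  · -- Q = R
    have haQR : dist Q R = 0 := by rw [← haa, ← ha]
    have hQR : Q = R := dist_eq_zero.mp haQR
    have hbc : b = c := by rw [hbb, hcc, ← hQR, dist_comm]
    have hd := H.interp_dist Q R (by rw [haQR]; exact hπ) (1/2) 0
      (by norm_num) (by norm_num)
    rw [H.interp_zero Q R (by rw [haQR]; exact hπ), haQR] at hd
    have hM : H.interp Q R (1/2) = Q := dist_eq_zero.mp (by rw [hd]; ring)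
    rw [hM, e1]
    linarith
  rcases eq_or_lt_of_le hc0 with hc | hc
  · -- P = Q
    have hcPQ : dist P Q = 0 := by rw [← hcc, ← hc]
    have hPQ : P = Q := dist_eq_zero.mp hcPQ
    have hab : a = b := by rw [haa, hbb, hPQ, dist_comm]
    have haπ : dist Q R < Real.pi := by
      have : a < Real.pi/2 := by rw [hab]; exact hbπ
      rw [← haa]; linarith
    have hd := H.interp_dist Q R haπ (1/2) 0 (by norm_num) (by norm_num)
    rw [H.interp_zero Q R haπ] at hd
    rw [hPQ, hd, ← haa]
    rw [show |(1:ℝ)/2 - 0| = 1/2 by norm_num]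
    linarith
  · -- main case
    obtain ⟨p, q, r, hp, hq, hr, hpq, hqr, hrp, hfin⟩ :=
      sphere_compare a b c ha hc hb0 hbπ hcπ h1 h2 h3
    have hper : dist Q R + dist R P + dist P Q < 2 * Real.pi := by
      rw [← haa, ← hbb, ← hcc]; linarith
    have hcomp := H.comparison Q R P hper p q r hp hq hr
      (by rw [hpq, haa]) (by rw [hqr, hbb]) (by rw [hrp, hcc])
      0 (1/2) (by norm_num) (by norm_num)
    rw [H.interp_zero P R (by rw [e2]; linarith)] at hcomp
    exact le_trans hcomp hfin
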